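/- Under the same setting (u_α a minimizer of the Bregman-penalized Tikhonov functional with constant initial guess so that the subgradient inner products cancel, ‖Tu† − v^δ‖ ≤ δ, and τ̲δ ≤ ‖Tu_α − v^δ‖ with τ̲ > 1), one has J(u_α) − J(u†) ≤ δ²/(2α) ≤ Ψ(δ)/(τ̲ − 1). -/

import Mathlib

/-- Scaling lemma for concave index functions: `Ψ(l·x) ≤ l·Ψ(x)` for `l ≥ 1`, `x ≥ 0`. -/
lemma concave_scale {Ψ : ℝ → ℝ} (hc : ConcaveOn ℝ (Set.Ici (0 : ℝ)) Ψ) (h0 : Ψ 0 = 0)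
    {l x : ℝ} (hl : 1 ≤ l) (hx : 0 ≤ x) : Ψ (l * x) ≤ l * Ψ x := by
  have hl0 : 0 < l := lt_of_lt_of_le one_pos hl
  have ha : (0:ℝ) ≤ 1 / l := by positivity
  have hb : (0:ℝ) ≤ 1 - 1 / l := by
    rw [sub_nonneg]
    exact div_le_one_of_le₀ hl (le_of_lt hl0)
  have hab : 1 / l + (1 - 1 / l) = (1:ℝ) := by ring
  have h := hc.2 (Set.mem_Ici.2 (by positivity : (0:ℝ) ≤ l * x)) (Set.mem_Ici.2 le_rfl)
      ha hb hab
  simp only [smul_eq_mul, mul_zero, add_zero, h0] at h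
  have hx' : 1 / l * (l * x) = x := by field_simp
  rw [hx'] at h
  calc Ψ (l * x) = l * (1 / l * Ψ (l * x)) := by field_simp
    _ ≤ l * Ψ x := by
        apply mul_le_mul_of_nonneg_left _ (le_of_lt hl0)
        linarith

set_option maxHeartbeats 1000000 in
/-- Lemma (J-difference bound): `J(u_α) - J(u†) ≤ δ²/(2α) ≤ Ψ(δ)/(τ̲-1)`. -/
theorem stmt_11 {N M : ℕ}
    (T : EuclideanSpace ℝ (Fin N) →L[ℝ] EuclideanSpace ℝ (Fin M))
    (J : EuclideanSpace ℝ (Fin N) → ℝ)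
    (uα udag : EuclideanSpace ℝ (Fin N))
    (vδ : EuclideanSpace ℝ (Fin M))
    (α δ τlo τhi : ℝ) (Ψ : ℝ → ℝ)
    (hα : 0 < α) (hδ : 0 ≤ δ)
    (hτlo : 1 < τlo) (hττ : τlo ≤ τhi)
    (hΨconc : ConcaveOn ℝ (Set.Ici (0 : ℝ)) Ψ)
    (hΨmono : MonotoneOn Ψ (Set.Ici (0 : ℝ)))
    (hΨ0 : Ψ 0 = 0)
    (hmin : (1 / 2) * ‖T uα - vδ‖ ^ 2 + α * J uα ≤
      (1 / 2) * ‖T udag - vδ‖ ^ 2 + α * J udag)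
    (hnoise : ‖T udag - vδ‖ ≤ δ)
    (hVSC : ∀ u, J udag - J u ≤ Ψ ‖T u - T udag‖)
    (hdisc_lo : τlo * δ ≤ ‖T uα - vδ‖)
    (hdisc_hi : ‖T uα - T udag‖ ≤ (τhi + 1) * δ) :
    J uα - J udag ≤ δ ^ 2 / (2 * α) ∧ δ ^ 2 / (2 * α) ≤ Ψ δ / (τlo - 1) := by
  set d := ‖T uα - vδ‖ with hdd
  set c := ‖T uα - T udag‖ with hcc
  have hd0 : 0 ≤ d := norm_nonneg _
  have hc0 : 0 ≤ c := norm_nonneg _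
  have hτ0 : 0 < τlo := lt_trans one_pos hτlo
  have hn2 : ‖T udag - vδ‖ ^ 2 ≤ δ ^ 2 := by
    nlinarith [norm_nonneg (T udag - vδ)]
  -- key energy inequality
  have key : (1 / 2) * d ^ 2 - (1 / 2) * δ ^ 2 ≤ α * (J udag - J uα) := by nlinarith
  constructor
  · rw [le_div_iff₀ (by positivity : (0:ℝ) < 2 * α)]
    nlinarith [sq_nonneg d]
  · -- part 2
    have hΨδ0 : 0 ≤ Ψ δ := by
      rw [← hΨ0]
      exact hΨmono (Set.mem_Ici.2 le_rfl) (Set.mem_Ici.2 hδ) hδ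
    rcases eq_or_lt_of_le hδ with h0 | hδpos
    · rw [← h0, hΨ0]
      simp
    · have hdτ : τlo * δ ≤ d := hdisc_lo
      have hdpos : 0 < d := lt_of_lt_of_le (by positivity) hdτ
      -- triangle: c ≤ d + δ
      have htri : c ≤ d + δ := by
        have he : T uα - T udag = (T uα - vδ) - (T udag - vδ) := by abel
        calc c = ‖(T uα - vδ) - (T udag - vδ)‖ := by rw [hcc, he]
          _ ≤ d + ‖T udag - vδ‖ := norm_sub_le _ _
          _ ≤ d + δ := by linarith
      -- c ≤ ((τlo+1)/τlo) * d
      have hcl : c ≤ ((τlo + 1) / τlo) * d := by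
        rw [div_mul_eq_mul_div, le_div_iff₀ hτ0]
        nlinarith
      have hl1 : (1:ℝ) ≤ (τlo + 1) / τlo := by
        rw [le_div_iff₀ hτ0]; linarith
      -- A: d² - δ² ≤ 2α Ψ c
      have hA : d ^ 2 - δ ^ 2 ≤ 2 * α * Ψ c := by
        have := hVSC uα
        nlinarith
      -- B: τlo Ψ c ≤ (τlo+1) Ψ d
      have hB : τlo * Ψ c ≤ (τlo + 1) * Ψ d := by
        have hB0 : Ψ c ≤ Ψ (((τlo + 1) / τlo) * d) :=
          hΨmono (Set.mem_Ici.2 hc0) (Set.mem_Ici.2 (by positivity)) hcl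
        have hB1 : Ψ (((τlo + 1) / τlo) * d) ≤ ((τlo + 1) / τlo) * Ψ d :=
          concave_scale hΨconc hΨ0 hl1 hd0
        have hB2 : Ψ c ≤ ((τlo + 1) / τlo) * Ψ d := le_trans hB0 hB1
        rw [div_mul_eq_mul_div, le_div_iff₀ hτ0] at hB2
        linarith [hB2]
      -- C: δ Ψ d ≤ d Ψ δ  (ratio monotonicity from concavity)
      have hC : δ * Ψ d ≤ d * Ψ δ := by
        have hδd' : δ ≤ d := le_trans (le_mul_of_one_le_left hδ hτlo.le) hdτ
        have hld : (1:ℝ) ≤ d / δ := (le_div_iff₀ hδpos).2 (by linarith)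
        have h := concave_scale hΨconc hΨ0 hld hδ
        have hde : d / δ * δ = d := by field_simp
        rw [hde] at h
        have hcan : δ * (d / δ) = d := by field_simp
        calc δ * Ψ d ≤ δ * (d / δ * Ψ δ) :=
              mul_le_mul_of_nonneg_left h (le_of_lt hδpos)
          _ = δ * (d / δ) * Ψ δ := by ring
          _ = d * Ψ δ := by rw [hcan]
      have hΨd0 : 0 ≤ Ψ d := by
        rw [← hΨ0]
        exact hΨmono (Set.mem_Ici.2 le_rfl) (Set.mem_Ici.2 hd0) hd0
      rw [div_le_div_iff₀ (by positivity : (0:ℝ) < 2 * α) (by linarith : (0:ℝ) < τlo - 1)]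
      -- goal: δ^2 * (τlo - 1) ≤ Ψ δ * (2 * α)
      -- D: τloδ(d² - δ²) ≤ 2α(τlo+1) d Ψδ
      have hD : τlo * δ * (d ^ 2 - δ ^ 2) ≤ 2 * α * (τlo + 1) * (d * Ψ δ) := by
        have h1 : τlo * δ * (d ^ 2 - δ ^ 2) ≤ 2 * α * (τlo * (δ * Ψ c)) := by
          nlinarith [mul_le_mul_of_nonneg_left hA (mul_nonneg hτ0.le hδ)]
        have h2 : τlo * (δ * Ψ c) ≤ (τlo + 1) * (δ * Ψ d) := by
          nlinarith [mul_le_mul_of_nonneg_left hB hδ]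
        have h3 : (τlo + 1) * (δ * Ψ d) ≤ (τlo + 1) * (d * Ψ δ) := by
          apply mul_le_mul_of_nonneg_left hC (by linarith)
        nlinarith [h1, h2, h3, hα.le]
      -- E: τlo²δ² ≤ d²
      have hE : τlo ^ 2 * δ ^ 2 ≤ d ^ 2 := by
        nlinarith [mul_self_le_mul_self (by positivity : (0:ℝ) ≤ τlo * δ) hdτ]
      -- F: multiply hD by τlo and use hE*δ to get δ d² (τlo²-1) ≤ 2α τlo(τlo+1) d Ψδ
      have hF0 : δ * d ^ 2 * (τlo ^ 2 - 1) ≤ 2 * α * τlo * (τlo + 1) * (d * Ψ δ) := by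
        have hEδ : τlo ^ 2 * δ ^ 3 ≤ δ * d ^ 2 := by nlinarith
        nlinarith [mul_le_mul_of_nonneg_left hD hτ0.le]
      -- cancel one factor of d
      have hF : δ * d * (τlo ^ 2 - 1) ≤ 2 * α * τlo * (τlo + 1) * Ψ δ := by
        have := (mul_le_mul_iff_of_pos_right hdpos).mp
          (show (δ * d * (τlo ^ 2 - 1)) * d ≤ (2 * α * τlo * (τlo + 1) * Ψ δ) * d by
            nlinarith [hF0])
        linarith
      -- use τloδ ≤ d and cancel τlo(τlo+1)
      have hG : τlo * (τlo + 1) * (δ ^ 2 * (τlo - 1)) ≤ τlo * (τlo + 1) * (Ψ δ * (2 * α)) := by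
        nlinarith [mul_le_mul_of_nonneg_left hdτ
          (mul_nonneg hδ (by nlinarith : (0:ℝ) ≤ τlo ^ 2 - 1))]
      have hpos : (0:ℝ) < τlo * (τlo + 1) := by positivity
      exact (mul_le_mul_iff_of_pos_left hpos).mp hG
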